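/- Let B(n) be the number of type B decorated permutations on {±1,...,±n}, i.e., signed permutations with each fixed point colored by one of two colors such that π(i)=i is colored clockwise iff π(-i)=-i is colored counterclockwise. Then B(n) = Σ_{k=0}^{n} C(n,k) · 2^{n-k}(n-k)!, and B satisfies B(0)=1 and B(n+1) = 2(n+1)B(n) + 1. -/

import Mathlib

open Finset Equiv

namespace BDecAux

/-- `Fin (2*n) ≃ Bool × Fin n`, sending `i < n` to `(false, i)` and `i ≥ n` to
`(true, 2n-1-i)`, so that `Fin.rev` corresponds to flipping the boolean. -/
def E0 (n : ℕ) : Fin (2 * n) ≃ Bool × Fin n where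
  toFun i := if h : (i : ℕ) < n then (false, ⟨i, h⟩)
    else (true, ⟨2 * n - 1 - i, by omega⟩)
  invFun x := if x.1 then ⟨2 * n - 1 - x.2, by have := x.2.isLt; omega⟩
    else ⟨x.2, by have := x.2.isLt; omega⟩
  left_inv i := by
    by_cases h : (i : ℕ) < n
    · simp [h]
    · have := i.isLt
      simp only [h, dif_neg, not_false_iff, if_pos]
      ext; simp; omega
  right_inv x := by
    obtain ⟨b, j⟩ := x
    have := j.isLt
    cases b
    · simp
    · simp only [if_pos]
      have h2 : ¬ ((2 * n - 1 - (j : ℕ)) < n) := by omega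
      simp only [h2, dif_neg, not_false_iff]
      ext
      · rfl
      · simp; omega

lemma E0_rev {n : ℕ} (i : Fin (2 * n)) :
    E0 n i.rev = ((!(E0 n i).1), (E0 n i).2) := by
  have hi := i.isLt
  have hrev : (i.rev : ℕ) = 2 * n - 1 - i := by
    rw [Fin.val_rev]; omega
  by_cases h : (i : ℕ) < n
  · have h' : ¬ ((i.rev : ℕ) < n) := by omega
    simp only [E0, Equiv.coe_fn_mk, dif_pos h, dif_neg h']
    ext
    · rfl
    · simp [hrev]; omega
  · have h' : (i.rev : ℕ) < n := by omega
    simp only [E0, Equiv.coe_fn_mk, dif_pos h', dif_neg h]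
    ext
    · rfl
    · simp [hrev]; omega

lemma E0_symm_neg {n : ℕ} (x : Bool × Fin n) :
    (E0 n).symm (!x.1, x.2) = ((E0 n).symm x).rev := by
  apply (E0 n).injective
  rw [Equiv.apply_symm_apply, E0_rev, Equiv.apply_symm_apply]

variable {n : ℕ}

def mkPerm (p : Equiv.Perm (Fin n)) (s : Fin n → Bool) : Equiv.Perm (Bool × Fin n) where
  toFun x := (xor (s x.2) x.1, p x.2)
  invFun y := (xor (s (p.symm y.2)) y.1, p.symm y.2)
  left_inv x := by obtain ⟨b, i⟩ := x; simp [← Bool.xor_assoc]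
  right_inv y := by obtain ⟨b, i⟩ := y; simp [← Bool.xor_assoc]

@[simp] lemma mkPerm_apply (p : Equiv.Perm (Fin n)) (s : Fin n → Bool) (b : Bool) (i : Fin n) :
    mkPerm p s (b, i) = (xor (s i) b, p i) := rfl

def pOf (σ : Equiv.Perm (Bool × Fin n))
    (h1 : ∀ x : Bool × Fin n, σ (!x.1, x.2) = (!(σ x).1, (σ x).2)) : Equiv.Perm (Fin n) where
  toFun i := (σ (false, i)).2
  invFun i := (σ.symm (false, i)).2
  left_inv i := by
    have h1' : ∀ x : Bool × Fin n, σ.symm (!x.1, x.2) = (!(σ.symm x).1, (σ.symm x).2) := by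
      intro x
      apply σ.injective
      rw [Equiv.apply_symm_apply, h1, Equiv.apply_symm_apply]
    have snd' : ∀ (b : Bool) (j : Fin n), (σ.symm (b, j)).2 = (σ.symm (false, j)).2 := by
      intro b j
      cases b
      · rfl
      · have := h1' (false, j)
        simp only [Bool.not_false] at this
        rw [this]
    calc (σ.symm (false, (σ (false, i)).2)).2
        = (σ.symm ((σ (false, i)).1, (σ (false, i)).2)).2 := (snd' _ _).symm
      _ = i := by rw [Prod.mk.eta, Equiv.symm_apply_apply]
  right_inv i := by
    have snd : ∀ (b : Bool) (j : Fin n), (σ (b, j)).2 = (σ (false, j)).2 := by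
      intro b j
      cases b
      · rfl
      · have := h1 (false, j)
        simp only [Bool.not_false] at this
        rw [this]
    calc (σ (false, (σ.symm (false, i)).2)).2
        = (σ ((σ.symm (false, i)).1, (σ.symm (false, i)).2)).2 := (snd _ _).symm
      _ = i := by rw [Prod.mk.eta, Equiv.apply_symm_apply]

@[simp] lemma pOf_apply (σ : Equiv.Perm (Bool × Fin n)) (h1) (i : Fin n) :
    pOf σ h1 i = (σ (false, i)).2 := rfl

/-- Decorated signed permutations in `Bool × Fin n` coordinates. -/
def DecB (n : ℕ) := {pd : Equiv.Perm (Bool × Fin n) × (Bool × Fin n → Bool) //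
    (∀ x : Bool × Fin n, pd.1 (!x.1, x.2) = (!(pd.1 x).1, (pd.1 x).2)) ∧
    (∀ x, pd.1 x ≠ x → pd.2 x = false) ∧
    (∀ x : Bool × Fin n, pd.1 x = x → pd.2 (!x.1, x.2) = !(pd.2 x))}

/-- Decorated signed permutations in `(p, s, c)` coordinates: a permutation `p` of the positive
letters, a sign `s i` and a color `c i` for each positive letter, where `c i = true` forces
`i` to be a genuinely (positively) fixed letter. -/
def DecC (n : ℕ) := {t : Equiv.Perm (Fin n) × (Fin n → Bool × Bool) //
    ∀ i, (t.2 i).2 = true → (t.1 i = i ∧ (t.2 i).1 = false)}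

def eBC (n : ℕ) : DecB n ≃ DecC n where
  toFun := fun ⟨(σ, e), h1, h2, _h3⟩ =>
    ⟨(pOf σ h1, fun i => ((σ (false, i)).1, e (false, i))), by
      intro i hi
      have h2' : ∀ x, σ x ≠ x → e x = false := h2
      have hi' : e (false, i) = true := hi
      have hfix : σ (false, i) = (false, i) := by
        by_contra hne
        rw [h2' _ hne] at hi'
        exact Bool.false_ne_true hi'
      constructor
      · simp [hfix]
      · simp [hfix]⟩
  invFun := fun ⟨(p, f), hc⟩ =>
    ⟨(mkPerm p (fun i => (f i).1), fun x =>
        if x.1 then (if p x.2 = x.2 ∧ (f x.2).1 = false then !(f x.2).2 else false)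
        else (f x.2).2), by
      refine ⟨?_, ?_, ?_⟩
      · rintro ⟨b, i⟩
        simp [Bool.xor_not]
      · rintro ⟨b, i⟩ hx
        have hnf : ¬(p i = i ∧ (f i).1 = false) := by
          rintro ⟨hp, hs⟩
          apply hx
          simp [hs, hp]
        cases b
        · simp only [if_neg, Bool.false_eq_true, if_false]
          by_contra hc2
          have : (f i).2 = true := by
            cases hft : (f i).2
            · exact absurd hft hc2
            · rfl
          exact hnf (hc i this)
        · simp [hnf]
      · rintro ⟨b, i⟩ hx
        simp only [mkPerm_apply, Prod.mk.injEq] at hx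
        have hs : (f i).1 = false := by
          cases hfs : (f i).1
          · rfl
          · rw [hfs] at hx; simp at hx
        have hp : p i = i := hx.2
        cases b
        · simp [hp, hs]
        · simp [hp, hs]⟩
  left_inv := by
    rintro ⟨⟨σ, e⟩, h1, h2, h3⟩
    apply Subtype.ext
    dsimp only
    refine Prod.ext ?_ ?_
    · apply Equiv.ext
      rintro ⟨b, i⟩
      cases b
      · simp
      · rw [mkPerm_apply]
        have := h1 (false, i)
        simp only [Bool.not_false] at this
        rw [this]
        simp [Bool.xor_true]
    · funext x
      obtain ⟨b, i⟩ := x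
      cases b
      · rfl
      · simp only [if_pos]
        by_cases hfix : σ (false, i) = (false, i)
        · rw [if_pos]
          · have := h3 (false, i) hfix
            simp only [Bool.not_false] at this
            rw [this]
          · constructor
            · simp [hfix]
            · simp [hfix]
        · rw [if_neg]
          · symm
            apply h2
            intro hcon
            apply hfix
            have := h1 (false, i)
            simp only [Bool.not_false] at this
            rw [hcon] at this
            have h2nd : (σ (false, i)).2 = i := congrArg Prod.snd this.symm
            have h1st : (σ (false, i)).1 = false := by
              have := congrArg Prod.fst this.symm
              simp at this
              exact this
            exact Prod.ext h1st h2nd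
          · rintro ⟨hp, hs⟩
            apply hfix
            rw [pOf_apply] at hp
            exact Prod.ext hs hp
  right_inv := by
    rintro ⟨⟨p, f⟩, hc⟩
    apply Subtype.ext
    dsimp only
    refine Prod.ext ?_ ?_
    · apply Equiv.ext
      intro i
      simp
    · funext i
      refine Prod.ext ?_ ?_
      · simp
      · simp

def DecA (n : ℕ) := {pd : Equiv.Perm (Fin (2 * n)) × (Fin (2 * n) → Bool) //
    (∀ i, pd.1 i.rev = (pd.1 i).rev) ∧
    (∀ i, pd.1 i ≠ i → pd.2 i = false) ∧
    (∀ i, pd.1 i = i → pd.2 i.rev = ! pd.2 i)}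

def eAB (n : ℕ) : DecA n ≃ DecB n :=
  Equiv.subtypeEquiv
    (Equiv.prodCongr ((E0 n).permCongr) (Equiv.arrowCongr (E0 n) (Equiv.refl Bool)))
    (by
      rintro ⟨π, d⟩
      dsimp only [Equiv.prodCongr, Equiv.coe_fn_mk, Prod.map]
      have hσ : ∀ x : Bool × Fin n,
          ((E0 n).permCongr π) x = E0 n (π ((E0 n).symm x)) := fun x => rfl
      have he : ∀ x : Bool × Fin n,
          (Equiv.arrowCongr (E0 n) (Equiv.refl Bool) d) x = d ((E0 n).symm x) := fun x => rfl
      constructor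
      · rintro ⟨h1, h2, h3⟩
        refine ⟨?_, ?_, ?_⟩
        · intro x
          rw [hσ, hσ, E0_symm_neg, h1, E0_rev]
        · intro x hx
          rw [he]
          apply h2
          intro hcon
          apply hx
          rw [hσ, hcon, Equiv.apply_symm_apply]
        · intro x hx
          rw [he, he, E0_symm_neg]
          apply h3
          have : π ((E0 n).symm x) = (E0 n).symm (E0 n (π ((E0 n).symm x))) :=
            (Equiv.symm_apply_apply _ _).symm
          rw [this, hσ x] at *
          rw [hx]
      · rintro ⟨h1, h2, h3⟩
        refine ⟨?_, ?_, ?_⟩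
        · intro i
          apply (E0 n).injective
          calc E0 n (π i.rev)
              = ((E0 n).permCongr π) (E0 n i.rev) := by
                rw [hσ, Equiv.symm_apply_apply]
            _ = ((E0 n).permCongr π) (!(E0 n i).1, (E0 n i).2) := by rw [E0_rev]
            _ = (!(((E0 n).permCongr π) (E0 n i)).1, (((E0 n).permCongr π) (E0 n i)).2) :=
                h1 _
            _ = (!(E0 n (π i)).1, (E0 n (π i)).2) := by
                rw [hσ, Equiv.symm_apply_apply]
            _ = E0 n ((π i).rev) := (E0_rev _).symm
        · intro i hi
          have h2x := h2 (E0 n i)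
          rw [hσ, Equiv.symm_apply_apply, he, Equiv.symm_apply_apply] at h2x
          apply h2x
          intro hcon
          exact hi ((E0 n).injective hcon)
        · intro i hi
          have h3x := h3 (E0 n i)
          rw [hσ, Equiv.symm_apply_apply, he, he, E0_symm_neg, Equiv.symm_apply_apply] at h3x
          exact h3x (by rw [hi]))

variable {n : ℕ}

def eCD (n : ℕ) : DecC n ≃
    Σ p : Equiv.Perm (Fin n), ∀ i : Fin n,
      {bc : Bool × Bool // bc.2 = true → (p i = i ∧ bc.1 = false)} :=
  (Equiv.subtypeProdEquivSigmaSubtype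
      (fun (p : Equiv.Perm (Fin n)) (f : Fin n → Bool × Bool) =>
        ∀ i, (f i).2 = true → (p i = i ∧ (f i).1 = false))).trans
    (Equiv.sigmaCongrRight fun p => Equiv.subtypePiEquivPi (β := fun _ : Fin n => Bool × Bool) (p := fun i bc => bc.2 = true → (p i = i ∧ bc.1 = false)))

lemma card_fiber (P : Prop) [Decidable P] :
    Nat.card {bc : Bool × Bool // bc.2 = true → (P ∧ bc.1 = false)} =
      if P then 3 else 2 := by
  by_cases h : P
  · rw [if_pos h]
    rw [Nat.card_congr (Equiv.subtypeEquivRight (q := fun bc : Bool × Bool =>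
      bc.2 = true → bc.1 = false) (fun bc => by simp [h]))]
    rw [Nat.card_eq_fintype_card]
    decide
  · rw [if_neg h]
    rw [Nat.card_congr (Equiv.subtypeEquivRight (q := fun bc : Bool × Bool =>
      bc.2 = false) (fun bc => by
        constructor
        · intro hb
          cases hb2 : bc.2
          · rfl
          · exact absurd (hb hb2).1 h
        · intro hb hb2
          rw [hb] at hb2
          exact absurd hb2 (by simp)))]
    rw [Nat.card_eq_fintype_card]
    decide

lemma card_DecC (n : ℕ) :
    Nat.card (DecC n) = ∑ p : Equiv.Perm (Fin n), ∏ i : Fin n,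
      (if p i = i then 3 else 2) := by
  rw [Nat.card_congr (eCD n), Nat.card_eq_fintype_card, Fintype.card_sigma]
  refine Finset.sum_congr rfl fun p _ => ?_
  rw [Fintype.card_pi]
  refine Finset.prod_congr rfl fun i _ => ?_
  rw [← Nat.card_eq_fintype_card, card_fiber]

lemma card_fix (T : Finset (Fin n)) :
    (Finset.univ.filter fun p : Equiv.Perm (Fin n) => ∀ i ∈ T, p i = i).card =
      Nat.factorial (n - T.card) := by
  rw [← Fintype.card_subtype]
  have e : Equiv.Perm {a : Fin n // a ∉ T} ≃ {p : Equiv.Perm (Fin n) // ∀ i ∈ T, p i = i} :=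
    (Equiv.Perm.subtypeEquivSubtypePerm (fun a => a ∉ T)).trans
      (Equiv.subtypeEquivRight fun f => by
        constructor
        · intro hf i hi
          exact hf i (by simp [hi])
        · intro hf a ha
          exact hf a (by simpa using ha))
  rw [← Fintype.card_congr e, Fintype.card_perm]
  congr 1
  rw [Fintype.card_subtype_compl]
  simp [Fintype.card_coe]

lemma count_sum (n : ℕ) :
    ∑ p : Equiv.Perm (Fin n), ∏ i : Fin n, (if p i = i then 3 else 2) =
      ∑ k ∈ Finset.range (n + 1), n.choose k * (2 ^ (n - k) * Nat.factorial (n - k)) := by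
  have step1 : ∀ p : Equiv.Perm (Fin n),
      (∏ i : Fin n, (if p i = i then 3 else 2)) =
        ∑ T ∈ (Finset.univ : Finset (Fin n)).powerset,
          (if ∀ i ∈ T, p i = i then 1 else 0) * 2 ^ (n - T.card) := by
    intro p
    have : ∀ i : Fin n, (if p i = i then (3:ℕ) else 2) =
        (if p i = i then 1 else 0) + 2 := by
      intro i; split <;> rfl
    rw [Finset.prod_congr rfl fun i _ => this i, Finset.prod_add]
    refine Finset.sum_congr rfl fun T hT => ?_
    rw [Finset.prod_boole, Finset.prod_const]
    congr 1
    · split <;> simp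
    · rw [Finset.card_sdiff_of_subset (Finset.subset_univ T), Finset.card_univ, Fintype.card_fin]
  rw [Finset.sum_congr rfl fun p _ => step1 p, Finset.sum_comm]
  have step2 : ∀ T ∈ (Finset.univ : Finset (Fin n)).powerset,
      (∑ p : Equiv.Perm (Fin n),
        (if ∀ i ∈ T, p i = i then (1:ℕ) else 0) * 2 ^ (n - T.card)) =
        Nat.factorial (n - T.card) * 2 ^ (n - T.card) := by
    intro T _
    rw [← Finset.sum_mul]
    congr 1
    rw [Finset.sum_boole]
    rw [← card_fix T]
    simp
  rw [Finset.sum_congr rfl step2, Finset.sum_powerset]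
  rw [Finset.card_univ, Fintype.card_fin]
  refine Finset.sum_congr rfl fun k hk => ?_
  have : ∀ T ∈ Finset.powersetCard k (Finset.univ : Finset (Fin n)),
      Nat.factorial (n - T.card) * 2 ^ (n - T.card) = Nat.factorial (n - k) * 2 ^ (n - k) := by
    intro T hT
    rw [(Finset.mem_powersetCard.mp hT).2]
  rw [Finset.sum_congr rfl this, Finset.sum_const, Finset.card_powersetCard,
    Finset.card_univ, Fintype.card_fin, smul_eq_mul]
  ring

lemma sum_rec (n : ℕ) :
    ∑ k ∈ Finset.range (n + 2), (n+1).choose k * (2 ^ (n + 1 - k) * Nat.factorial (n + 1 - k)) =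
      2 * (n + 1) * (∑ k ∈ Finset.range (n + 1), n.choose k * (2 ^ (n - k) * Nat.factorial (n - k))) + 1 := by
  rw [Finset.sum_range_succ]
  have hlast : (n+1).choose (n+1) * (2 ^ (n + 1 - (n+1)) * Nat.factorial (n + 1 - (n+1))) = 1 := by
    simp [Nat.choose_self]
  rw [hlast, Finset.mul_sum]
  congr 1
  refine Finset.sum_congr rfl fun k hk => ?_
  have hk' : k ≤ n := Nat.lt_succ_iff.mp (Finset.mem_range.mp hk)
  have h1 : n + 1 - k = (n - k) + 1 := by omega
  have key : (n+1).choose k * ((n - k) + 1) = (n + 1) * n.choose k := by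
    calc (n+1).choose k * ((n - k) + 1) = (n+1).choose k * (n + 1 - k) := by rw [← h1]
      _ = n.choose k * (n + 1) := (Nat.choose_mul_succ_eq n k).symm
      _ = (n + 1) * n.choose k := Nat.mul_comm _ _
  rw [h1, pow_succ, Nat.factorial_succ]
  calc (n+1).choose k * (2 ^ (n - k) * 2 * ((n - k + 1) * Nat.factorial (n - k)))
      = ((n+1).choose k * ((n - k) + 1)) * 2 * (2 ^ (n - k) * Nat.factorial (n - k)) := by ring
    _ = ((n + 1) * n.choose k) * 2 * (2 ^ (n - k) * Nat.factorial (n - k)) := by rw [key]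
    _ = 2 * (n + 1) * (n.choose k * (2 ^ (n - k) * Nat.factorial (n - k))) := by ring

end BDecAux

/-- The number of type `B` decorated permutations on `{±1, …, ±n}`.
We model `{-n, …, -1, 1, …, n}` by `Fin (2*n)` with negation `Fin.rev`.
A type `B` decorated permutation is a signed permutation `π` (i.e. `π(-i) = -π(i)`)
together with a 2-coloring of its fixed points (`true` = clockwise) such that `i` is a
clockwise fixed point iff `-i` is a counterclockwise fixed point; the coloring is recorded
as a Boolean function vanishing off the fixed points. -/
noncomputable def BDecCount (n : ℕ) : ℕ :=
  Nat.card {pd : Equiv.Perm (Fin (2 * n)) × (Fin (2 * n) → Bool) //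
    (∀ i, pd.1 i.rev = (pd.1 i).rev) ∧
    (∀ i, pd.1 i ≠ i → pd.2 i = false) ∧
    (∀ i, pd.1 i = i → pd.2 i.rev = ! pd.2 i)}

/-- `B(n) = Σ_{k=0}^n C(n,k)·2^{n-k}(n-k)!` (choose the clockwise fixed points among the
positive letters, then a signed permutation of the rest), with `B(0) = 1` and the
recurrence `B(n+1) = 2(n+1)B(n) + 1`. -/
theorem BDecCount_formula :
    (∀ n : ℕ, BDecCount n =
      ∑ k ∈ Finset.range (n + 1),
        n.choose k * (2 ^ (n - k) * Nat.factorial (n - k))) ∧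
    BDecCount 0 = 1 ∧
    ∀ n : ℕ, BDecCount (n + 1) = 2 * (n + 1) * BDecCount n + 1 := by
  have he : ∀ n : ℕ, BDecCount n =
      ∑ k ∈ Finset.range (n + 1),
        n.choose k * (2 ^ (n - k) * Nat.factorial (n - k)) := by
    intro n
    have h0 : BDecCount n = Nat.card (BDecAux.DecA n) := rfl
    rw [h0, Nat.card_congr ((BDecAux.eAB n).trans (BDecAux.eBC n)),
      BDecAux.card_DecC, BDecAux.count_sum]
  refine ⟨he, ?_, ?_⟩
  · rw [he 0]
    simp
  · intro n
    rw [he (n + 1), he n]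
    exact BDecAux.sum_rec n
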